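/- Let $a, b, c, x, y, z$ be reals with $ax + by + cz = 0$, and define $B_1 = a - b - c - 2by - (a+b-c)x$, $B_2 = b - c - a - 2cz - (b+c-a)y$, $B_3 = c - a - b - 2ax - (c+a-b)z$. Then $B_1 B_2 + B_2 B_3 + B_3 B_1 = (2ab + 2bc + 2ca - a^2 - b^2 - c^2)(xy + yz + zx + 1)$. -/
import Mathlib

theorem B_product_identity
    (a b c x y z : ℝ) (h : a * x + b * y + c * z = 0)
    (B1 B2 B3 : ℝ)
    (hB1 : B1 = a - b - c - 2 * b * y - (a + b - c) * x)
    (hB2 : B2 = b - c - a - 2 * c * z - (b + c - a) * y)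
    (hB3 : B3 = c - a - b - 2 * a * x - (c + a - b) * z) :
    B1 * B2 + B2 * B3 + B3 * B1
      = (2 * a * b + 2 * b * c + 2 * c * a - a ^ 2 - b ^ 2 - c ^ 2)
        * (x * y + y * z + z * x + 1) := by
  subst hB1 hB2 hB3
  linear_combination (2*a + 2*b + 2*c + 2*a*x + 2*b*x - 2*c*x - 2*a*y + 2*b*y + 2*c*y + 2*a*z - 2*b*z + 2*c*z) * h
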